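/- Let f : ℂ → ℂ be an entire function and let (Eₙ)_{n ≥ 0} be a sequence of nonempty compact subsets of ℂ such that Eₙ₊₁ ⊆ f(Eₙ) for all n ≥ 0. Then there exists ζ ∈ ℂ such that fⁿ(ζ) ∈ Eₙ for all n ≥ 0. Moreover, if f is a transcendental entire function and Eₙ ∩ J(f) ≠ ∅ for all n ≥ 0, then ζ can be chosen to lie in J(f). -/

import Mathlib

open Set Filter Topology Bornology Metric

noncomputable section

noncomputable instance : UniformSpace (OnePoint ℂ) := uniformSpaceOfCompactR1

/-- The family of iterates of `f` is normal on `V`. -/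
def IterNormalOn (f : ℂ → ℂ) (V : Set ℂ) : Prop :=
  ∀ k : ℕ → ℕ, ∃ s : ℕ → ℕ, StrictMono s ∧ ∃ g : ℂ → OnePoint ℂ,
    TendstoLocallyUniformlyOn
      (fun n z => ((f^[k (s n)] z : ℂ) : OnePoint ℂ)) g atTop V

/-- The Fatou set of `f`. -/
def fatouSet (f : ℂ → ℂ) : Set ℂ :=
  {z | ∃ V : Set ℂ, IsOpen V ∧ z ∈ V ∧ IterNormalOn f V}

/-- The Julia set of `f`. -/
def juliaSet (f : ℂ → ℂ) : Set ℂ := (fatouSet f)ᶜ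

/-- The escaping set of `f`. -/
def escapingSet (f : ℂ → ℂ) : Set ℂ :=
  {z | Tendsto (fun n => ‖f^[n] z‖) atTop atTop}

/-- `f` is a transcendental entire function. -/
def TranscendentalEntire (f : ℂ → ℂ) : Prop :=
  Differentiable ℂ f ∧ ∀ p : Polynomial ℂ, f ≠ fun z => p.eval z

/-- The maximum modulus `M(r, f)`. -/
def maxMod (f : ℂ → ℂ) (r : ℝ) : ℝ :=
  sSup ((fun z => ‖f z‖) '' Metric.sphere (0 : ℂ) r)

/-- `R(f)`, the least `R` such that `M(r) > r` for `r ≥ R`. -/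
def Rf (f : ℂ → ℂ) : ℝ :=
  sInf {R : ℝ | 0 ≤ R ∧ ∀ r ≥ R, maxMod f r > r}

/-- The set `A_R(f)`. -/
def ARset (f : ℂ → ℂ) (R : ℝ) : Set ℂ :=
  {z | ∀ n : ℕ, (maxMod f)^[n] R ≤ ‖f^[n] z‖}

/-- The fast escaping set `A(f)`. -/
def fastEscaping (f : ℂ → ℂ) : Set ℂ :=
  {z | ∃ R > Rf f, ∃ l : ℕ, f^[l] z ∈ ARset f R}

/-- The collection of connected components of a subset of `ℂ`. -/
def components (S : Set ℂ) : Set (Set ℂ) :=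
  {C | ∃ z ∈ S, C = connectedComponentIn S z}

/-- `S` is an (infinite) spider's web. -/
def SpidersWeb (S : Set ℂ) : Prop :=
  IsConnected S ∧ ∃ G : ℕ → Set ℂ,
    (∀ n, IsOpen (G n)) ∧ (∀ n, IsBounded (G n)) ∧
    (∀ n, SimplyConnectedSpace (G n)) ∧
    (∀ n, G n ⊆ G (n + 1)) ∧ (∀ n, frontier (G n) ⊆ S) ∧
    (⋃ n, G n) = Set.univ

/-- An unbounded continuum: a closed, connected, unbounded subset of `ℂ`. -/
def UnboundedContinuum (Γ : Set ℂ) : Prop :=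
  IsClosed Γ ∧ IsConnected Γ ∧ ¬ IsBounded Γ

/-- `U` is a Fatou component of `f`. -/
def FatouComponent (f : ℂ → ℂ) (U : Set ℂ) : Prop :=
  ∃ z ∈ fatouSet f, U = connectedComponentIn (fatouSet f) z

/-- `U` is a multiply connected wandering domain of `f`. -/
def MultiplyConnectedWanderingDomain (f : ℂ → ℂ) (U : Set ℂ) : Prop :=
  FatouComponent f U ∧ ¬ SimplyConnectedSpace U

/-- `U` has infinite inner connectivity. -/
def InfiniteInnerConnectivity (f : ℂ → ℂ) (U : Set ℂ) : Prop :=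
  ∃ z₀ ∈ U, ∃ N : ℕ, ∀ n ≥ N,
    (components ((f^[n] '' U ∩ {z | ‖z‖ < ‖f^[n] z₀‖})ᶜ)).Infinite

private lemma fatou_isOpen (f : ℂ → ℂ) : IsOpen (fatouSet f) := by
  rw [isOpen_iff_forall_mem_open]
  rintro z ⟨V, hVo, hzV, hN⟩
  exact ⟨V, fun w hw => ⟨V, hVo, hw, hN⟩, hVo, hzV⟩

private lemma fatou_fwd (f : ℂ → ℂ) (hopen : IsOpenMap f)
    {z : ℂ} (hz : z ∈ fatouSet f) : f z ∈ fatouSet f := by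
  classical
  obtain ⟨V, hVo, hzV, hN⟩ := hz
  refine ⟨f '' V, hopen V hVo, ⟨z, hzV, rfl⟩, ?_⟩
  intro k
  obtain ⟨s, hs, g, hg⟩ := hN (fun n => k n + 1)
  have hwd : ∀ z₁ ∈ V, ∀ z₂ ∈ V, f z₁ = f z₂ → g z₁ = g z₂ := by
    intro z₁ h₁ z₂ h₂ hf12
    have t₁ := hg.tendsto_at h₁
    have t₂ := hg.tendsto_at h₂
    have heq : (fun n => ((f^[k (s n) + 1] z₁ : ℂ) : OnePoint ℂ))
        = fun n => ((f^[k (s n) + 1] z₂ : ℂ) : OnePoint ℂ) := by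
      funext n
      simp only [Function.iterate_succ_apply, hf12]
    rw [heq] at t₁
    exact tendsto_nhds_unique t₁ t₂
  set g' : ℂ → OnePoint ℂ := fun w =>
    if h : w ∈ f '' V then g h.choose else ((0 : ℂ) : OnePoint ℂ) with hg'
  have hgdef : ∀ y ∈ V, g' (f y) = g y := by
    intro y hy
    have h : f y ∈ f '' V := ⟨y, hy, rfl⟩
    have hc := h.choose_spec
    simp only [hg', dif_pos h]
    exact hwd _ hc.1 _ hy hc.2
  refine ⟨s, hs, g', ?_⟩
  intro u hu w hw
  obtain ⟨z₀, hz₀, rfl⟩ := hw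
  obtain ⟨t, ht, hev⟩ := hg u hu z₀ hz₀
  rw [nhdsWithin_eq_nhds.2 (hVo.mem_nhds hz₀)] at ht
  have ht' : t ∩ V ∈ 𝓝 z₀ := inter_mem ht (hVo.mem_nhds hz₀)
  obtain ⟨t', ht'sub, ht'o, hz₀t'⟩ := _root_.mem_nhds_iff.1 ht'
  refine ⟨f '' t', mem_nhdsWithin_of_mem_nhds
    ((hopen t' ht'o).mem_nhds ⟨z₀, hz₀t', rfl⟩), ?_⟩
  refine hev.mono fun n hn => ?_
  rintro y ⟨x, hxt', rfl⟩
  have hxt := ht'sub hxt'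
  have := hn x hxt.1
  rw [hgdef x hxt.2]
  simpa only [Function.iterate_succ_apply] using this

private lemma exists_orbit (f : ℂ → ℂ) (hc : Continuous f) (E : ℕ → Set ℂ)
    (hne : ∀ n, (E n).Nonempty) (hcpt : ∀ n, IsCompact (E n))
    (hsub : ∀ n, E (n + 1) ⊆ f '' E n) : ∃ ζ : ℂ, ∀ n, f^[n] ζ ∈ E n := by
  set K : ℕ → Set ℂ := fun n => ⋂ k ∈ Set.Iic n, f^[k] ⁻¹' E k with hK
  have hmem : ∀ n z, z ∈ K n ↔ ∀ k ≤ n, f^[k] z ∈ E k := by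
    intro n z; simp [hK]
  have hKcl : ∀ n, IsClosed (K n) :=
    fun n => isClosed_biInter fun k _ => ((hcpt k).isClosed).preimage (hc.iterate k)
  have hKsub : ∀ n, K n ⊆ E 0 := by
    intro n z hz
    simpa using (hmem n z).1 hz 0 (Nat.zero_le n)
  have hchain : ∀ n, K (n + 1) ⊆ K n := by
    intro n z hz
    exact (hmem n z).2 fun k hk => (hmem (n + 1) z).1 hz k (hk.trans n.le_succ)
  have hKne : ∀ n, (K n).Nonempty := by
    have claim : ∀ n m : ℕ, ∃ z, ∀ k ≤ n, f^[k] z ∈ E (m + k) := by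
      intro n
      induction n with
      | zero =>
        intro m
        obtain ⟨z, hz⟩ := hne m
        exact ⟨z, fun k hk => by simpa [Nat.le_zero.1 hk] using hz⟩
      | succ n ih =>
        intro m
        obtain ⟨z, hz⟩ := ih (m + 1)
        have hz0 : z ∈ E (m + 1) := by simpa using hz 0 (Nat.zero_le n)
        obtain ⟨w, hw, hfw⟩ := hsub m hz0
        refine ⟨w, fun k hk => ?_⟩
        match k with
        | 0 => simpa using hw
        | j + 1 =>
          have hj : j ≤ n := Nat.succ_le_succ_iff.1 hk
          have := hz j hj
          rw [Function.iterate_succ_apply, hfw]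
          convert this using 2
          omega
    intro n
    obtain ⟨z, hz⟩ := claim n 0
    exact ⟨z, (hmem n z).2 fun k hk => by simpa using hz k hk⟩
  have := IsCompact.nonempty_iInter_of_sequence_nonempty_isCompact_isClosed K hchain hKne
    ((hcpt 0).of_isClosed_subset (hKcl 0) (hKsub 0)) hKcl
  obtain ⟨ζ, hζ⟩ := this
  exact ⟨ζ, fun n => (hmem n ζ).1 (Set.mem_iInter.1 hζ n) n le_rfl⟩

/-- Lemma 7.5 (topological lemma): if `Eₙ₊₁ ⊆ f(Eₙ)` for compact nonempty sets,
there is a point whose orbit visits the `Eₙ`; it can be taken in `J(f)` if each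
`Eₙ` meets `J(f)` and `f` is transcendental. -/
theorem orbit_through_compact_sets
    (f : ℂ → ℂ) (hf : Differentiable ℂ f) (E : ℕ → Set ℂ)
    (hne : ∀ n, (E n).Nonempty) (hcpt : ∀ n, IsCompact (E n))
    (hsub : ∀ n, E (n + 1) ⊆ f '' E n) :
    (∃ ζ : ℂ, ∀ n, f^[n] ζ ∈ E n) ∧
    (TranscendentalEntire f → (∀ n, (E n ∩ juliaSet f).Nonempty) →
      ∃ ζ ∈ juliaSet f, ∀ n, f^[n] ζ ∈ E n) := by
  constructor
  · exact exists_orbit f hf.continuous E hne hcpt hsub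
  · intro htr hJ
    have hA : AnalyticOnNhd ℂ f Set.univ := fun z _ => hf.analyticAt z
    have hop : IsOpenMap f := by
      rcases hA.is_constant_or_isOpen isPreconnected_univ with ⟨v, hv⟩ | h
      · exact absurd (funext fun z => by simpa using hv z trivial) (htr.2 (Polynomial.C v))
      · exact fun s hs => h s (Set.subset_univ s) hs
    have hJcl : IsClosed (juliaSet f) := (fatou_isOpen f).isClosed_compl
    obtain ⟨ζ, hζ⟩ := exists_orbit f hf.continuous (fun n => E n ∩ juliaSet f) hJ
      (fun n => (hcpt n).inter_right hJcl)
      (by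
        rintro n w ⟨hw, hwJ⟩
        obtain ⟨x, hx, rfl⟩ := hsub n hw
        refine ⟨x, ⟨hx, fun hxF => hwJ (fatou_fwd f hop hxF)⟩, rfl⟩)
    refine ⟨ζ, ?_, fun n => (hζ n).1⟩
    have := (hζ 0).2
    simpa using this


end
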